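/- Suppose r + l ≤ n ≤ m, A ∈ ℝ^{m×n}, the m×r leading block A_{m,r} has rank r and the m×(r+l) leading block A_{m,r+l} has rank r+l. Then ‖A_{m,r}⁺‖ ≤ ‖A_{m,r+l}⁺‖, where M⁺ denotes the Moore–Penrose pseudoinverse and ‖·‖ the spectral norm. -/

import Mathlib

open Matrix

/-- The `j`-th largest singular value (1-indexed) of a real matrix, defined as the square
root of the `j`-th largest eigenvalue of `AᴴA`; it is `0` for `j` out of range. -/
noncomputable def singularValue {m n : ℕ} (A : Matrix (Fin m) (Fin n) ℝ) (j : ℕ) : ℝ :=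
  if h : 1 ≤ j ∧ j ≤ n then
    Real.sqrt ((show (Aᵀ * A).IsHermitian from Matrix.isHermitian_conjTranspose_mul_self A).eigenvalues
      (Tuple.sort (show (Aᵀ * A).IsHermitian from Matrix.isHermitian_conjTranspose_mul_self A).eigenvalues ⟨n - j, by omega⟩))
  else 0


/-- The Moore–Penrose pseudoinverse of a full-column-rank matrix: `A⁺ = (AᵀA)⁻¹ Aᵀ`. -/
noncomputable def pinvFCR {m n : ℕ} (A : Matrix (Fin m) (Fin n) ℝ) : Matrix (Fin n) (Fin m) ℝ :=
  (Aᵀ * A)⁻¹ * Aᵀ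

namespace PinvAux

lemma dot_self_nonneg {k : ℕ} (x : Fin k → ℝ) : 0 ≤ x ⬝ᵥ x :=
  Finset.sum_nonneg fun _ _ => mul_self_nonneg _

lemma spectral_real {N : ℕ} {H : Matrix (Fin N) (Fin N) ℝ} (hH : H.IsHermitian) :
    H = (hH.eigenvectorUnitary : Matrix (Fin N) (Fin N) ℝ) * diagonal hH.eigenvalues *
      (star hH.eigenvectorUnitary : Matrix (Fin N) (Fin N) ℝ) := by
  have h := hH.spectral_theorem
  rwa [RCLike.ofReal_real_eq_id, Function.id_comp] at h

lemma shift_posSemidef {N : ℕ} {H : Matrix (Fin N) (Fin N) ℝ} (hH : H.IsHermitian) {c : ℝ}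
    (hc : ∀ i, hH.eigenvalues i ≤ c) :
    (c • (1 : Matrix (Fin N) (Fin N) ℝ) - H).PosSemidef := by
  have hu : (hH.eigenvectorUnitary : Matrix (Fin N) (Fin N) ℝ) *
      (star hH.eigenvectorUnitary : Matrix (Fin N) (Fin N) ℝ) = 1 :=
    Matrix.mem_unitaryGroup_iff.mp hH.eigenvectorUnitary.2
  have hd : diagonal (fun i => c - hH.eigenvalues i)
      = c • (1 : Matrix (Fin N) (Fin N) ℝ) - diagonal hH.eigenvalues := by
    ext i j
    by_cases h : i = j <;>
      simp [Matrix.diagonal_apply, Matrix.one_apply, Matrix.sub_apply, h]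
  have key : c • (1 : Matrix (Fin N) (Fin N) ℝ) - H
      = (hH.eigenvectorUnitary : Matrix (Fin N) (Fin N) ℝ) *
        diagonal (fun i => c - hH.eigenvalues i) *
        (star hH.eigenvectorUnitary : Matrix (Fin N) (Fin N) ℝ) := by
    rw [hd, Matrix.mul_sub, Matrix.sub_mul, Matrix.mul_smul, mul_one, Matrix.smul_mul, hu,
      ← spectral_real hH]
  rw [key]
  have hdiag : (diagonal (fun i => c - hH.eigenvalues i) :
      Matrix (Fin N) (Fin N) ℝ).PosSemidef :=
    Matrix.posSemidef_diagonal_iff.mpr fun i => by linarith [hc i]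
  simpa [Matrix.star_eq_conjTranspose] using
    hdiag.mul_mul_conjTranspose_same (hH.eigenvectorUnitary : Matrix (Fin N) (Fin N) ℝ)

lemma shift_posSemidef' {N : ℕ} {H : Matrix (Fin N) (Fin N) ℝ} (hH : H.IsHermitian) {c : ℝ}
    (hc : ∀ i, c ≤ hH.eigenvalues i) :
    (H - c • (1 : Matrix (Fin N) (Fin N) ℝ)).PosSemidef := by
  have hu : (hH.eigenvectorUnitary : Matrix (Fin N) (Fin N) ℝ) *
      (star hH.eigenvectorUnitary : Matrix (Fin N) (Fin N) ℝ) = 1 :=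
    Matrix.mem_unitaryGroup_iff.mp hH.eigenvectorUnitary.2
  have hd : diagonal (fun i => hH.eigenvalues i - c)
      = diagonal hH.eigenvalues - c • (1 : Matrix (Fin N) (Fin N) ℝ) := by
    ext i j
    by_cases h : i = j <;>
      simp [Matrix.diagonal_apply, Matrix.one_apply, Matrix.sub_apply, h]
  have key : H - c • (1 : Matrix (Fin N) (Fin N) ℝ)
      = (hH.eigenvectorUnitary : Matrix (Fin N) (Fin N) ℝ) *
        diagonal (fun i => hH.eigenvalues i - c) *
        (star hH.eigenvectorUnitary : Matrix (Fin N) (Fin N) ℝ) := by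
    rw [hd, Matrix.mul_sub, Matrix.sub_mul, Matrix.mul_smul, mul_one, Matrix.smul_mul, hu,
      ← spectral_real hH]
  rw [key]
  have hdiag : (diagonal (fun i => hH.eigenvalues i - c) :
      Matrix (Fin N) (Fin N) ℝ).PosSemidef :=
    Matrix.posSemidef_diagonal_iff.mpr fun i => by linarith [hc i]
  simpa [Matrix.star_eq_conjTranspose] using
    hdiag.mul_mul_conjTranspose_same (hH.eigenvectorUnitary : Matrix (Fin N) (Fin N) ℝ)

lemma rayleigh_le {N : ℕ} {H : Matrix (Fin N) (Fin N) ℝ} (hH : H.IsHermitian) {c : ℝ}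
    (hc : ∀ i, hH.eigenvalues i ≤ c) (x : Fin N → ℝ) :
    x ⬝ᵥ (H *ᵥ x) ≤ c * (x ⬝ᵥ x) := by
  have h := (shift_posSemidef hH hc).dotProduct_mulVec_nonneg x
  simp only [star_trivial, Matrix.sub_mulVec, Matrix.smul_mulVec, Matrix.one_mulVec,
    dotProduct_sub, dotProduct_smul, smul_eq_mul] at h
  linarith

lemma rayleigh_ge {N : ℕ} {H : Matrix (Fin N) (Fin N) ℝ} (hH : H.IsHermitian) {c : ℝ}
    (hc : ∀ i, c ≤ hH.eigenvalues i) (x : Fin N → ℝ) :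
    c * (x ⬝ᵥ x) ≤ x ⬝ᵥ (H *ᵥ x) := by
  have h := (shift_posSemidef' hH hc).dotProduct_mulVec_nonneg x
  simp only [star_trivial, Matrix.sub_mulVec, Matrix.smul_mulVec, Matrix.one_mulVec,
    dotProduct_sub, dotProduct_smul, smul_eq_mul] at h
  linarith

lemma eigen_unit {N : ℕ} {H : Matrix (Fin N) (Fin N) ℝ} (hH : H.IsHermitian) (i : Fin N) :
    (⇑(hH.eigenvectorBasis i) : Fin N → ℝ) ⬝ᵥ ⇑(hH.eigenvectorBasis i) = 1 := by
  have h := hH.eigenvectorBasis.orthonormal.1 i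
  have h2 : (inner ℝ (hH.eigenvectorBasis i) (hH.eigenvectorBasis i) : ℝ) = 1 := by
    rw [real_inner_self_eq_norm_sq, h, one_pow]
  simp only [PiLp.inner_apply, RCLike.inner_apply, conj_trivial] at h2
  simpa [dotProduct] using h2

lemma eigen_rayleigh {N : ℕ} {H : Matrix (Fin N) (Fin N) ℝ} (hH : H.IsHermitian) (i : Fin N) :
    hH.eigenvalues i
      = (⇑(hH.eigenvectorBasis i) : Fin N → ℝ) ⬝ᵥ (H *ᵥ ⇑(hH.eigenvectorBasis i)) := by
  have h := hH.eigenvalues_eq i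
  simpa using h

lemma exists_unit_eigenvector {N : ℕ} {H : Matrix (Fin N) (Fin N) ℝ} (hH : H.IsHermitian)
    (i : Fin N) :
    ∃ v : Fin N → ℝ, v ⬝ᵥ v = 1 ∧ H *ᵥ v = hH.eigenvalues i • v :=
  ⟨⇑(hH.eigenvectorBasis i), eigen_unit hH i, hH.mulVec_eigenvectorBasis i⟩

lemma sort_last_ge {N : ℕ} (hN : 1 ≤ N) (f : Fin N → ℝ) (i : Fin N) :
    f i ≤ f (Tuple.sort f ⟨N - 1, by omega⟩) := by
  have hm := Tuple.monotone_sort f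
  have h1 : f i = (f ∘ Tuple.sort f) ((Tuple.sort f)⁻¹ i) := by simp
  rw [h1]
  apply hm
  rw [Fin.le_def]
  have h2 := ((Tuple.sort f)⁻¹ i).isLt
  show _ ≤ N - 1
  omega

lemma eig_pos_of_rank {M k : ℕ} (D : Matrix (Fin M) (Fin k) ℝ) (h : D.rank = k)
    {G : Matrix (Fin k) (Fin k) ℝ} (hG : G = Dᵀ * D) (hH : G.IsHermitian) (i : Fin k) :
    0 < hH.eigenvalues i := by
  have hDH : Dᴴ = Dᵀ := Matrix.conjTranspose_eq_transpose_of_trivial D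
  have hps : G.PosSemidef := by
    have := Matrix.posSemidef_conjTranspose_mul_self D
    rwa [hDH, ← hG] at this
  rcases (hps.eigenvalues_nonneg i).lt_or_eq with hlt | heq
  · exact hlt
  · exfalso
    have hrank : G.rank = k := by rw [hG, Matrix.rank_transpose_mul_self, h]
    have hcard := hH.rank_eq_card_non_zero_eigs
    have hlt2 : Fintype.card {j // hH.eigenvalues j ≠ 0} < Fintype.card (Fin k) :=
      Fintype.card_subtype_lt (x := i) (by simp [← heq])
    rw [Fintype.card_fin] at hlt2
    omega

lemma gram_det_ne {M k : ℕ} (D : Matrix (Fin M) (Fin k) ℝ) (h : D.rank = k) :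
    IsUnit (Dᵀ * D).det := by
  have hH : (Dᵀ * D).IsHermitian := by
    have := Matrix.isHermitian_conjTranspose_mul_self D
    rwa [Matrix.conjTranspose_eq_transpose_of_trivial] at this
  have hdet := hH.det_eq_prod_eigenvalues
  have hpos : 0 < (Dᵀ * D).det := by
    rw [hdet]
    exact Finset.prod_pos fun i _ => eig_pos_of_rank D h rfl hH i
  exact isUnit_iff_ne_zero.mpr hpos.ne'

lemma gram_inv_mul {M k : ℕ} (D : Matrix (Fin M) (Fin k) ℝ) (h : D.rank = k) :
    (Dᵀ * D)⁻¹ * (Dᵀ * D) = 1 :=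
  Matrix.nonsing_inv_mul _ (gram_det_ne D h)

lemma gram_mul_inv {M k : ℕ} (D : Matrix (Fin M) (Fin k) ℝ) (h : D.rank = k) :
    (Dᵀ * D) * (Dᵀ * D)⁻¹ = 1 :=
  Matrix.mul_nonsing_inv _ (gram_det_ne D h)

lemma dot_gram {M k : ℕ} (D : Matrix (Fin M) (Fin k) ℝ) (x : Fin k → ℝ) :
    x ⬝ᵥ ((Dᵀ * D) *ᵥ x) = (D *ᵥ x) ⬝ᵥ (D *ᵥ x) := by
  rw [← Matrix.mulVec_mulVec, Matrix.dotProduct_mulVec, Matrix.vecMul_transpose]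

lemma mulVec_append_zero {M r l : ℕ} (C : Matrix (Fin M) (Fin (r + l)) ℝ)
    (B : Matrix (Fin M) (Fin r) ℝ) (hBC : ∀ i j, B i j = C i (Fin.castAdd l j))
    (u : Fin r → ℝ) :
    C *ᵥ (Fin.append u (0 : Fin l → ℝ)) = B *ᵥ u := by
  funext i
  simp only [Matrix.mulVec, dotProduct]
  rw [Fin.sum_univ_add]
  simp [hBC]

end PinvAux

open PinvAux in
/-- If `r + l ≤ n ≤ m`, the first `r` columns of `A ∈ ℝ^{m×n}` have rank `r`, and the
first `r + l` columns have rank `r + l`, then `‖A_{m,r}⁺‖ ≤ ‖A_{m,r+l}⁺‖` in the spectral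
norm (`singularValue · 1`). -/
theorem pinv_norm_mono_leading_columns
    {m n r l : ℕ} (hrl : r + l ≤ n) (hnm : n ≤ m)
    (A : Matrix (Fin m) (Fin n) ℝ)
    (h1 : (A.submatrix id (Fin.castLE (le_trans (Nat.le_add_right r l) hrl))).rank = r)
    (h2 : (A.submatrix id (Fin.castLE hrl)).rank = r + l) :
    singularValue (pinvFCR (A.submatrix id
        (Fin.castLE (le_trans (Nat.le_add_right r l) hrl)))) 1 ≤
      singularValue (pinvFCR (A.submatrix id (Fin.castLE hrl))) 1 := by
  set B := A.submatrix id (Fin.castLE (le_trans (Nat.le_add_right r l) hrl)) with hB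
  set C := A.submatrix id (Fin.castLE hrl) with hC
  by_cases hm : 1 ≤ m
  swap
  · simp only [singularValue]
    rw [dif_neg (fun h => hm h.2), dif_neg (fun h => hm h.2)]
  simp only [singularValue]
  rw [dif_pos ⟨le_refl 1, hm⟩, dif_pos ⟨le_refl 1, hm⟩]
  set P := pinvFCR B with hP
  set Q := pinvFCR C with hQ
  set hHP := (show (Pᵀ * P).IsHermitian from Matrix.isHermitian_conjTranspose_mul_self P) with hHPdef
  set hHQ := (show (Qᵀ * Q).IsHermitian from Matrix.isHermitian_conjTranspose_mul_self Q) with hHQdef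
  apply Real.sqrt_le_sqrt
  -- RHS eigenvalue is nonnegative
  by_cases hr : r = 0
  · -- the left pseudoinverse Gram matrix is zero
    subst hr
    have hz : Pᴴ * P = 0 := by
      ext i j
      simp [Matrix.mul_apply]
    have h0 : ∀ i, hHP.eigenvalues i = 0 := by
      intro i
      obtain ⟨v, hv1, hve⟩ := exists_unit_eigenvector hHP i
      have hgen : ∀ μ : ℝ, (Pᴴ * P) *ᵥ v = μ • v → μ = 0 := by
        intro μ hvm
        rw [hz, Matrix.zero_mulVec] at hvm
        have h4 : v ⬝ᵥ (μ • v) = μ := by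
          rw [dotProduct_smul, hv1, smul_eq_mul, mul_one]
        rw [← h4, ← hvm, dotProduct_zero]
      exact hgen _ hve
    rw [h0]
    exact (Matrix.posSemidef_conjTranspose_mul_self Q).eigenvalues_nonneg _
  -- now r ≥ 1
  have hrpos : 1 ≤ r := Nat.one_le_iff_ne_zero.mpr hr
  have : Nonempty (Fin r) := ⟨⟨0, by omega⟩⟩
  have : Nonempty (Fin (r + l)) := ⟨⟨0, by omega⟩⟩
  have hBCe : ∀ i j, B i j = C i (Fin.castAdd l j) := fun i j => rfl
  have hGr : (Bᵀ * B).IsHermitian := by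
    have := Matrix.isHermitian_conjTranspose_mul_self B
    rwa [Matrix.conjTranspose_eq_transpose_of_trivial] at this
  have hGc : (Cᵀ * C).IsHermitian := by
    have := Matrix.isHermitian_conjTranspose_mul_self C
    rwa [Matrix.conjTranspose_eq_transpose_of_trivial] at this
  obtain ⟨jr, hjr⟩ := Finite.exists_min hGr.eigenvalues
  obtain ⟨jc, hjc⟩ := Finite.exists_min hGc.eigenvalues
  set lr := hGr.eigenvalues jr with hlr
  set lc := hGc.eigenvalues jc with hlc
  have hlr_pos : 0 < lr := eig_pos_of_rank B h1 rfl hGr jr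
  have hlc_pos : 0 < lc := eig_pos_of_rank C h2 rfl hGc jc
  -- middle inequality : lc ≤ lr
  obtain ⟨vr, hvr1, hvec⟩ := exists_unit_eigenvector hGr jr
  have hCu : C *ᵥ (Fin.append vr (0 : Fin l → ℝ)) = B *ᵥ vr :=
    mulVec_append_zero C B hBCe vr
  have hdotu : (Fin.append vr (0 : Fin l → ℝ)) ⬝ᵥ (Fin.append vr (0 : Fin l → ℝ)) = 1 := by
    simp only [dotProduct, Fin.sum_univ_add, Fin.append_left, Fin.append_right, Pi.zero_apply,
      mul_zero, Finset.sum_const_zero, add_zero]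
    exact hvr1
  have hmid : lc ≤ lr := by
    have h3 := rayleigh_ge hGc hjc (Fin.append vr (0 : Fin l → ℝ))
    rw [hdotu, mul_one, dot_gram, hCu, ← dot_gram, hvec, dotProduct_smul, hvr1,
      smul_eq_mul, mul_one] at h3
    exact h3
  -- left inequality : every eigenvalue of PᴴP is at most 1/lr
  have hLHS : ∀ i, hHP.eigenvalues i ≤ 1 / lr := by
    intro i
    obtain ⟨x, hx1, hxe⟩ := exists_unit_eigenvector hHP i
    have hPH : Pᴴ = Pᵀ := Matrix.conjTranspose_eq_transpose_of_trivial P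
    suffices hsuff : ∀ μ : ℝ, (Pᴴ * P) *ᵥ x = μ • x → μ ≤ 1 / lr from hsuff _ hxe
    intro μ hxm
    rw [hPH] at hxm
    have h2e : μ = (P *ᵥ x) ⬝ᵥ (P *ᵥ x) := by
      have h4 : x ⬝ᵥ ((Pᵀ * P) *ᵥ x) = μ := by
        rw [hxm, dotProduct_smul, hx1, smul_eq_mul, mul_one]
      rw [← h4, dot_gram]
    have hGy : (Bᵀ * B) *ᵥ (P *ᵥ x) = Bᵀ *ᵥ x := by
      rw [hP, pinvFCR, Matrix.mulVec_mulVec, ← Matrix.mul_assoc,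
        gram_mul_inv B h1, Matrix.one_mul]
    have ht1 : (B *ᵥ (P *ᵥ x)) ⬝ᵥ (B *ᵥ (P *ᵥ x)) = (P *ᵥ x) ⬝ᵥ ((Bᵀ * B) *ᵥ (P *ᵥ x)) :=
      (dot_gram B _).symm
    have ht2 : (B *ᵥ (P *ᵥ x)) ⬝ᵥ x = (P *ᵥ x) ⬝ᵥ ((Bᵀ * B) *ᵥ (P *ᵥ x)) := by
      rw [dotProduct_comm, Matrix.dotProduct_mulVec, ← Matrix.mulVec_transpose, ← hGy,
        dotProduct_comm]
    have hzz := dot_self_nonneg ((B *ᵥ (P *ᵥ x)) - x)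
    have hexp : ((B *ᵥ (P *ᵥ x)) - x) ⬝ᵥ ((B *ᵥ (P *ᵥ x)) - x)
        = (P *ᵥ x) ⬝ᵥ ((Bᵀ * B) *ᵥ (P *ᵥ x)) - 2 * ((P *ᵥ x) ⬝ᵥ ((Bᵀ * B) *ᵥ (P *ᵥ x))) + 1 := by
      rw [sub_dotProduct, dotProduct_sub, dotProduct_sub, ht1, ht2, hx1,
        dotProduct_comm x (B *ᵥ (P *ᵥ x)), ht2]
      ring
    have ht_le : (P *ᵥ x) ⬝ᵥ ((Bᵀ * B) *ᵥ (P *ᵥ x)) ≤ 1 := by rw [hexp] at hzz; linarith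
    have hray := rayleigh_ge hGr hjr (P *ᵥ x)
    rw [h2e, le_div_iff₀ hlr_pos]
    nlinarith [hray]
  -- right inequality : 1/lc is at most the top eigenvalue of QᴴQ
  have hub : ∀ i, hHQ.eigenvalues i
      ≤ hHQ.eigenvalues (Tuple.sort hHQ.eigenvalues ⟨m - 1, by omega⟩) :=
    fun i => sort_last_ge hm hHQ.eigenvalues i
  have hRHS : 1 / lc ≤ hHQ.eigenvalues (Tuple.sort hHQ.eigenvalues ⟨m - 1, by omega⟩) := by
    obtain ⟨vc, hvc1, hvecc⟩ := exists_unit_eigenvector hGc jc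
    have hQH : Qᴴ = Qᵀ := Matrix.conjTranspose_eq_transpose_of_trivial Q
    have hQw : Q *ᵥ (C *ᵥ vc) = vc := by
      rw [hQ, pinvFCR, Matrix.mulVec_mulVec, Matrix.mul_assoc,
        gram_inv_mul C h2, Matrix.one_mulVec]
    have hnum : (C *ᵥ vc) ⬝ᵥ ((Qᴴ * Q) *ᵥ (C *ᵥ vc)) = 1 := by
      rw [hQH, dot_gram, hQw, hvc1]
    have hden : (C *ᵥ vc) ⬝ᵥ (C *ᵥ vc) = lc := by
      rw [← dot_gram, hvecc, dotProduct_smul, hvc1, smul_eq_mul, mul_one]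
    have hray := rayleigh_le hHQ hub (C *ᵥ vc)
    rw [hQH] at hnum
    rw [hnum, hden] at hray
    rw [div_le_iff₀ hlc_pos]
    linarith
  calc hHP.eigenvalues _ ≤ 1 / lr := hLHS _
    _ ≤ 1 / lc := one_div_le_one_div_of_le hlc_pos hmid
    _ ≤ _ := hRHS
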